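/- arXiv:2208.09638 — 6 statements merged into one kernel-verified Lean document; each statement's English description precedes it below -/
import Mathlib

section
/- Let $\mathcal{X}$ be a finite set, $P_0$ a probability on $\mathcal{X}$, and suppose a full-data test $t : \mathcal{X} \to [0,1]$ takes at least two distinct values $q_1 < q_2$ strictly between 0 and 1. Then the corresponding $b(x,J) = \min_{x': x'_J = x_J} t(x')$ is NOT an extreme point of the polytope $\mathcal{B}$ of worst-case-monotone tests. -/
/-- The polytope of worst-case-monotone tests: [0,1]-valued functions b (x, J)
depending on x only through x_J, with size control under P0 at level alpha,
and monotonicity b (x, J) <= b (x, K). -/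
def polytopeB {ι : Type*} [Fintype ι] [DecidableEq ι]
    {𝒳 : ι → Type*} [∀ i, Fintype (𝒳 i)]
    (P0 : (∀ i, 𝒳 i) → ℝ) (α : ℝ) : Set ((∀ i, 𝒳 i) → Finset ι → ℝ) :=
  {b | (∀ x J, b x J ∈ Set.Icc (0 : ℝ) 1) ∧
    (∀ x x' (J : Finset ι), (∀ i ∈ J, x i = x' i) → b x J = b x' J) ∧
    (∑ x, P0 x * b x Finset.univ ≤ α) ∧
    (∀ x (J : Finset ι), b x J ≤ b x Finset.univ)}

set_option maxHeartbeats 1000000 in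
theorem stmt_8 {ι : Type*} [Fintype ι] [DecidableEq ι]
    {𝒳 : ι → Type*} [∀ i, Fintype (𝒳 i)] [∀ i, DecidableEq (𝒳 i)]
    (P0 : (∀ i, 𝒳 i) → ℝ) (hP0 : ∀ x, 0 ≤ P0 x) (hP0sum : ∑ x, P0 x = 1)
    (α : ℝ) (hα : 0 < α ∧ α < 1)
    (t : (∀ i, 𝒳 i) → ℝ) (ht : ∀ x, t x ∈ Set.Icc (0 : ℝ) 1)
    (q1 q2 : ℝ) (hq : 0 < q1 ∧ q1 < q2 ∧ q2 < 1)
    (hx1 : ∃ x, t x = q1) (hx2 : ∃ x, t x = q2)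
    (b : (∀ i, 𝒳 i) → Finset ι → ℝ)
    (hb : ∀ x J, b x J =
      (Finset.univ.filter fun x' : ∀ i, 𝒳 i => ∀ i ∈ J, x' i = x i).inf'
        ⟨x, Finset.mem_filter.mpr ⟨Finset.mem_univ x, fun _ _ => rfl⟩⟩ t)
    (hbB : b ∈ polytopeB P0 α) :
    b ∉ Set.extremePoints ℝ (polytopeB P0 α) := by
  classical
  obtain ⟨hq1pos, hq12, hq2lt⟩ := hq
  obtain ⟨x1, hx1⟩ := hx1
  obtain ⟨x2, hx2⟩ := hx2
  obtain ⟨hIcc, hmeas, hsize, hmono⟩ := id hbB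
  have hq12ne : q1 ≠ q2 := ne_of_lt hq12
  -- values of b lie in the image of t
  set T : Finset ℝ := Finset.image t Finset.univ with hT
  have hbT : ∀ x J, b x J ∈ T := by
    intro x J
    rw [hb]
    obtain ⟨y, _, hval⟩ := Finset.exists_mem_eq_inf'
      (⟨x, Finset.mem_filter.mpr ⟨Finset.mem_univ x, fun _ _ => rfl⟩⟩ :
        (Finset.univ.filter fun x' : ∀ i, 𝒳 i => ∀ i ∈ J, x' i = x i).Nonempty) t
    rw [hval]
    exact Finset.mem_image_of_mem t (Finset.mem_univ y)
  have hbuniv : ∀ x, b x Finset.univ = t x := by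
    intro x
    rw [hb]
    obtain ⟨y, hy, hval⟩ := Finset.exists_mem_eq_inf'
      (⟨x, Finset.mem_filter.mpr ⟨Finset.mem_univ x, fun _ _ => rfl⟩⟩ :
        (Finset.univ.filter fun x' : ∀ i, 𝒳 i => ∀ i ∈ Finset.univ, x' i = x i).Nonempty) t
    rw [hval]
    have : y = x := funext fun i => (Finset.mem_filter.mp hy).2 i (Finset.mem_univ i)
    rw [this]
  have hq1T : q1 ∈ T := hx1 ▸ Finset.mem_image_of_mem t (Finset.mem_univ x1)
  have hq2T : q2 ∈ T := hx2 ▸ Finset.mem_image_of_mem t (Finset.mem_univ x2)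
  -- masses
  set m1 : ℝ := ∑ x ∈ Finset.univ.filter (fun x => t x = q1), P0 x with hm1
  set m2 : ℝ := ∑ x ∈ Finset.univ.filter (fun x => t x = q2), P0 x with hm2
  have hm1nn : 0 ≤ m1 := Finset.sum_nonneg fun x _ => hP0 x
  have hm2nn : 0 ≤ m2 := Finset.sum_nonneg fun x _ => hP0 x
  set c1 : ℝ := m2 + (if m1 = 0 then 1 else 0) with hc1def
  set c2 : ℝ := m1 + (if m2 = 0 then 1 else 0) with hc2def
  have hc1nn : 0 ≤ c1 := by
    rw [hc1def]; split_ifs <;> linarith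
  have hc2nn : 0 ≤ c2 := by
    rw [hc2def]; split_ifs <;> linarith
  have hcpos : 0 < c1 + c2 := by
    by_cases h1 : m1 = 0
    · have h : (1:ℝ) ≤ c1 := by rw [hc1def, if_pos h1]; linarith
      linarith
    · have h0 : 0 < m1 := lt_of_le_of_ne hm1nn (fun h => h1 h.symm)
      have h : m1 ≤ c2 := by rw [hc2def]; split_ifs <;> linarith
      linarith
  have hbal : c1 * m1 = c2 * m2 := by
    rw [hc1def, hc2def]
    by_cases h1 : m1 = 0 <;> by_cases h2 : m2 = 0
    · rw [h1, h2]; try ring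
    · rw [if_neg h2, h1]; ring
    · rw [if_neg h1, h2]; ring
    · rw [if_neg h1, if_neg h2]; ring
  -- perturbation function
  set g : ℝ → ℝ := fun v => if v = q1 then c1 else if v = q2 then -c2 else 0 with hg
  have hgabs : ∀ v, |g v| ≤ c1 + c2 := by
    intro v
    simp only [hg]
    split_ifs
    · rw [abs_of_nonneg hc1nn]; linarith
    · rw [abs_neg, abs_of_nonneg hc2nn]; linarith
    · simp; linarith
  -- minimal gap
  set Pp : Finset (ℝ × ℝ) := (T ×ˢ T).filter fun p => p.1 < p.2 with hPp
  have hPne : Pp.Nonempty := by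
    refine ⟨(q1, q2), ?_⟩
    simp only [hPp, Finset.mem_filter, Finset.mem_product]
    exact ⟨⟨hq1T, hq2T⟩, hq12⟩
  set δ : ℝ := Pp.inf' hPne (fun p => p.2 - p.1) with hδ
  have hδpos : 0 < δ := by
    rw [hδ]
    rw [Finset.lt_inf'_iff]
    intro p hp
    have := (Finset.mem_filter.mp hp).2
    linarith
  have hgap : ∀ v ∈ T, ∀ w ∈ T, v < w → δ ≤ w - v := by
    intro v hv w hw hvw
    have hmem : (v, w) ∈ Pp := by
      simp only [hPp, Finset.mem_filter, Finset.mem_product]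
      exact ⟨⟨hv, hw⟩, hvw⟩
    exact Finset.inf'_le _ hmem
  set M : ℝ := min δ (min q1 (1 - q2)) with hMdef
  have hMδ : M ≤ δ := min_le_left _ _
  have hMq1 : M ≤ q1 := le_trans (min_le_right _ _) (min_le_left _ _)
  have hMq2 : M ≤ 1 - q2 := le_trans (min_le_right _ _) (min_le_right _ _)
  have hMpos : 0 < M := by
    rw [hMdef]
    exact lt_min hδpos (lt_min hq1pos (by linarith))
  set ε : ℝ := M / (4 * (c1 + c2 + 1)) with hε
  have hden : 0 < 4 * (c1 + c2 + 1) := by linarith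
  have hεpos : 0 < ε := div_pos hMpos hden
  have hεb : ε * (c1 + c2) ≤ M / 4 := by
    rw [hε]
    rw [div_mul_eq_mul_div, div_le_div_iff₀ hden (by norm_num : (0:ℝ) < 4)]
    nlinarith
  clear_value m1 m2 c1 c2 g Pp δ M ε
  -- key monotonicity-preservation bound
  have hkey : ∀ v ∈ T, ∀ w ∈ T, v ≤ w → |ε * (g v - g w)| ≤ w - v := by
    intro v hv w hw hvw
    rcases eq_or_lt_of_le hvw with rfl | hlt
    · simp
    · have h1 := hgap v hv w hw hlt
      have h2 : |g v - g w| ≤ 2 * (c1 + c2) := by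
        have := hgabs v; have := hgabs w
        calc |g v - g w| ≤ |g v| + |g w| := abs_sub _ _
          _ ≤ 2 * (c1 + c2) := by linarith
      have : |ε * (g v - g w)| = ε * |g v - g w| := by
        rw [abs_mul, abs_of_nonneg hεpos.le]
      rw [this]
      have h3 : ε * |g v - g w| ≤ ε * (2 * (c1 + c2)) :=
        mul_le_mul_of_nonneg_left h2 hεpos.le
      nlinarith
  -- range preservation
  have hεg0 : ∀ v, |ε * g v| ≤ M / 4 := by
    intro v
    rw [abs_mul, abs_of_nonneg hεpos.le]
    calc ε * |g v| ≤ ε * (c1 + c2) := mul_le_mul_of_nonneg_left (hgabs v) hεpos.le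
      _ ≤ M / 4 := hεb
  have hIcc' : ∀ v : ℝ, 0 ≤ v → v ≤ 1 →
      (0 ≤ v + ε * g v ∧ v + ε * g v ≤ 1) ∧ (0 ≤ v - ε * g v ∧ v - ε * g v ≤ 1) := by
    intro v h0 h1
    obtain ⟨hl, hr⟩ := abs_le.mp (hεg0 v)
    have hεc1 : 0 ≤ ε * c1 := mul_nonneg hεpos.le hc1nn
    have hεc2 : 0 ≤ ε * c2 := mul_nonneg hεpos.le hc2nn
    by_cases hv1 : v = q1
    · have hgv : g v = c1 := by simp only [hg, hv1, if_pos]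
      rw [hgv] at hl hr ⊢
      refine ⟨⟨by linarith, by linarith⟩, ⟨by linarith, by linarith⟩⟩
    · by_cases hv2 : v = q2
      · have hgv : g v = -c2 := by simp only [hg, hv2, if_neg (Ne.symm hq12ne), if_pos]
        rw [hgv] at hl hr ⊢
        have hl' : ε * c2 ≤ M / 4 := by
          have : ε * -c2 = -(ε * c2) := by ring
          rw [this] at hl; linarith
        have he : ε * -c2 = -(ε * c2) := by ring
        rw [he]
        refine ⟨⟨by linarith, by linarith⟩, ⟨by linarith, by linarith⟩⟩
      · have hgv : g v = 0 := by simp only [hg, if_neg hv1, if_neg hv2]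
        rw [hgv]
        constructor <;> constructor <;> simp <;> linarith
  -- the size perturbation vanishes
  have hsum0 : ∑ x, P0 x * g (t x) = 0 := by
    have hstep : ∑ x, P0 x * g (t x)
        = ∑ x, ((if t x = q1 then c1 * P0 x else 0) - (if t x = q2 then c2 * P0 x else 0)) := by
      apply Finset.sum_congr rfl
      intro x _
      by_cases h1 : t x = q1
      · have h2 : ¬ t x = q2 := by rw [h1]; exact hq12ne
        simp only [hg, if_pos h1, if_neg h2]
        ring
      · by_cases h2 : t x = q2
        · simp only [hg, if_neg h1, if_pos h2]
          ring
        · simp only [hg, if_neg h1, if_neg h2]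
          ring
    rw [hstep, Finset.sum_sub_distrib, ← Finset.sum_filter, ← Finset.sum_filter]
    have e1 : ∑ x ∈ Finset.univ.filter (fun x => t x = q1), c1 * P0 x = c1 * m1 := by
      rw [hm1, Finset.mul_sum]
    have e2 : ∑ x ∈ Finset.univ.filter (fun x => t x = q2), c2 * P0 x = c2 * m2 := by
      rw [hm2, Finset.mul_sum]
    rw [e1, e2, hbal, sub_self]
  -- the two perturbed tests
  set b1 : (∀ i, 𝒳 i) → Finset ι → ℝ := fun x J => b x J + ε * g (b x J) with hb1
  set b2 : (∀ i, 𝒳 i) → Finset ι → ℝ := fun x J => b x J - ε * g (b x J) with hb2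
  have hb1mem : b1 ∈ polytopeB P0 α := by
    refine ⟨?_, ?_, ?_, ?_⟩
    · intro x J
      obtain ⟨h0, h1⟩ := hIcc x J
      exact Set.mem_Icc.mpr ((hIcc' (b x J) h0 h1).1)
    · intro x x' J hxx'
      simp only [hb1, hmeas x x' J hxx']
    · have : ∑ x, P0 x * b1 x Finset.univ
          = ∑ x, P0 x * b x Finset.univ + ε * ∑ x, P0 x * g (t x) := by
        rw [Finset.mul_sum, ← Finset.sum_add_distrib]
        apply Finset.sum_congr rfl
        intro x _
        simp only [hb1, hbuniv x]
        ring
      rw [this, hsum0]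
      simpa using hsize
    · intro x J
      have hk := abs_le.mp (hkey (b x J) (hbT x J) (b x Finset.univ) (hbT x Finset.univ) (hmono x J))
      simp only [hb1]
      linarith [hk.2]
  have hb2mem : b2 ∈ polytopeB P0 α := by
    refine ⟨?_, ?_, ?_, ?_⟩
    · intro x J
      obtain ⟨h0, h1⟩ := hIcc x J
      exact Set.mem_Icc.mpr ((hIcc' (b x J) h0 h1).2)
    · intro x x' J hxx'
      simp only [hb2, hmeas x x' J hxx']
    · have : ∑ x, P0 x * b2 x Finset.univ
          = ∑ x, P0 x * b x Finset.univ - ε * ∑ x, P0 x * g (t x) := by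
        rw [Finset.mul_sum, ← Finset.sum_sub_distrib]
        apply Finset.sum_congr rfl
        intro x _
        simp only [hb2, hbuniv x]
        ring
      rw [this, hsum0]
      simpa using hsize
    · intro x J
      have hk := abs_le.mp (hkey (b x J) (hbT x J) (b x Finset.univ) (hbT x Finset.univ) (hmono x J))
      simp only [hb2]
      linarith [hk.1]
  intro hext
  have hopen : b ∈ openSegment ℝ b1 b2 := by
    refine ⟨1/2, 1/2, by norm_num, by norm_num, by norm_num, ?_⟩
    funext x J
    simp only [Pi.add_apply, Pi.smul_apply, smul_eq_mul, hb1, hb2]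
    ring
  obtain ⟨h1, _⟩ := (mem_extremePoints.mp hext).2 _ hb1mem _ hb2mem hopen
  -- h1 : b1 = b, contradiction
  have e1 : ε * c1 = 0 := by
    have := congrFun (congrFun h1 x1) Finset.univ
    simp only [hb1] at this
    have hbx1 : b x1 Finset.univ = q1 := by rw [hbuniv, hx1]
    rw [hbx1] at this
    have hgq1 : g q1 = c1 := by rw [hg]; simp
    rw [hgq1] at this
    linarith
  have e2 : ε * c2 = 0 := by
    have := congrFun (congrFun h1 x2) Finset.univ
    simp only [hb1] at this
    have hbx2 : b x2 Finset.univ = q2 := by rw [hbuniv, hx2]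
    rw [hbx2] at this
    have hgq2 : g q2 = -c2 := by rw [hg]; simp [Ne.symm hq12ne]
    rw [hgq2] at this
    have : ε * (-c2) = 0 := by linarith
    linarith
  nlinarith
end

section
/- Let $\mathcal{X}$ be a finite set, $P_0$ a probability on $\mathcal{X}$, and $b \in \mathcal{B}$ with $b(x,K) \in \{0,1\}$ for all $x$ with $P_0(x) > 0$, and suppose the size constraint binds: $\mathbb{E}_{P_0}[b(X,K)] = \alpha$. Then there exists a probability measure $Q$ on $\mathcal{X} \times \mathcal{P}(K)$ (with $Q$ concentrated on $J = K$) such that $b$ maximizes $\sum_{x,J} b(x,J) Q(x,J)$ over all $b' \in \mathcal{B}$. -/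
theorem stmt_9 {ι : Type*} [Fintype ι] [DecidableEq ι]
    {𝒳 : ι → Type*} [∀ i, Fintype (𝒳 i)]
    (P0 : (∀ i, 𝒳 i) → ℝ) (hP0 : ∀ x, 0 ≤ P0 x) (hP0sum : ∑ x, P0 x = 1)
    (α : ℝ) (hα : 0 < α ∧ α < 1)
    (b : (∀ i, 𝒳 i) → Finset ι → ℝ) (hbB : b ∈ polytopeB P0 α)
    (h01 : ∀ x, 0 < P0 x → b x Finset.univ = 0 ∨ b x Finset.univ = 1)
    (hbind : ∑ x, P0 x * b x Finset.univ = α) :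
    ∃ Q : (∀ i, 𝒳 i) → Finset ι → ℝ,
      (∀ x J, 0 ≤ Q x J) ∧
      (∑ x, ∑ J : Finset ι, Q x J = 1) ∧
      (∀ x (J : Finset ι), J ≠ Finset.univ → Q x J = 0) ∧
      (∀ b' ∈ polytopeB P0 α,
        ∑ x, ∑ J : Finset ι, Q x J * b' x J ≤ ∑ x, ∑ J : Finset ι, Q x J * b x J) := by
  classical
  obtain ⟨hb01, _, hbsize, _⟩ := hbB
  refine ⟨fun x J => if J = Finset.univ then P0 x * (1 + b x Finset.univ - α) else 0,
    ?_, ?_, ?_, ?_⟩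
  · intro x J
    dsimp only
    by_cases h : J = Finset.univ
    · rw [if_pos h]
      have := (hb01 x Finset.univ).1
      nlinarith [hP0 x, hα.2]
    · simp [h]
  · have : ∀ x : (∀ i, 𝒳 i), ∑ J : Finset ι,
        (if J = Finset.univ then P0 x * (1 + b x Finset.univ - α) else 0)
        = P0 x * (1 + b x Finset.univ - α) := by
      intro x; simp
    simp only [this]
    have : ∑ x, P0 x * (1 + b x Finset.univ - α)
        = (1 - α) * ∑ x, P0 x + ∑ x, P0 x * b x Finset.univ := by
      rw [Finset.mul_sum, ← Finset.sum_add_distrib]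
      congr 1; ext x; ring
    rw [this, hP0sum, hbind]; ring
  · intro x J hJ; simp [hJ]
  · intro b' hb'
    obtain ⟨hb'01, _, hb'size, _⟩ := hb'
    have hsimp : ∀ c : (∀ i, 𝒳 i) → Finset ι → ℝ, ∑ x, ∑ J : Finset ι,
        (if J = Finset.univ then P0 x * (1 + b x Finset.univ - α) else 0) * c x J
        = ∑ x, P0 x * (1 + b x Finset.univ - α) * c x Finset.univ := by
      intro c
      refine Finset.sum_congr rfl fun x _ => ?_
      rw [Finset.sum_eq_single Finset.univ]
      · simp
      · intro J _ hJ; simp [hJ]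
      · simp
    rw [hsimp, hsimp]
    have key1 : ∀ x, P0 x * (1 + b x Finset.univ - α) * b x Finset.univ
        = P0 x * ((1 - α) * b x Finset.univ + b x Finset.univ) := by
      intro x
      rcases eq_or_lt_of_le (hP0 x) with h | h
      · rw [← h]; ring
      · rcases h01 x h with h1 | h1 <;> rw [h1] <;> ring
    have key2 : ∀ x, P0 x * (1 + b x Finset.univ - α) * b' x Finset.univ
        ≤ P0 x * ((1 - α) * b' x Finset.univ + b x Finset.univ) := by
      intro x
      have h1 := (hb01 x Finset.univ).1
      have h2 := (hb'01 x Finset.univ).2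
      have h3 := (hb'01 x Finset.univ).1
      nlinarith [mul_nonneg (mul_nonneg (hP0 x) h1)
        (by linarith : (0:ℝ) ≤ 1 - b' x Finset.univ)]
    calc ∑ x, P0 x * (1 + b x Finset.univ - α) * b' x Finset.univ
        ≤ ∑ x, P0 x * ((1 - α) * b' x Finset.univ + b x Finset.univ) :=
          Finset.sum_le_sum fun x _ => key2 x
      _ = (1 - α) * (∑ x, P0 x * b' x Finset.univ) + ∑ x, P0 x * b x Finset.univ := by
          rw [Finset.mul_sum, ← Finset.sum_add_distrib]
          congr 1; ext x; ring
      _ ≤ (1 - α) * α + α := by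
          rw [hbind]
          have : 0 ≤ 1 - α := by linarith [hα.2]
          nlinarith [hb'size]
      _ = (1 - α) * (∑ x, P0 x * b x Finset.univ) + ∑ x, P0 x * b x Finset.univ := by
          rw [hbind]
      _ = ∑ x, P0 x * ((1 - α) * b x Finset.univ + b x Finset.univ) := by
          rw [Finset.mul_sum, ← Finset.sum_add_distrib]
          congr 1; ext x; ring
      _ = ∑ x, P0 x * (1 + b x Finset.univ - α) * b x Finset.univ := by
          exact (Finset.sum_congr rfl fun x _ => (key1 x)).symm
end

section
/- Suppose the analyst's prior puts probability one on a fixed availability set $J' \subseteq K$: $Q(X_{J'}, J = J')$ with $Q(J = J') = 1$. Then within the polytope $\mathcal{B}$ of worst-case-monotone tests, there exists a maximizer $b$ of expected power $\mathbb{E}_Q[b(X_J, J)]$ such that $b(x, K) = b(x_{J'}, J')$ for all $x$, i.e., the optimal test depends only on the coordinates in $J'$ and rejects with probability 0 on any reported set not containing $J'$. -/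
lemma polytopeB_exists_max {ι : Type*} [Fintype ι] [DecidableEq ι]
    {𝒳 : ι → Type*} [∀ i, Fintype (𝒳 i)]
    (P0 : (∀ i, 𝒳 i) → ℝ) (α : ℝ) (hα : 0 ≤ α)
    (Q : (∀ i, 𝒳 i) → Finset ι → ℝ) :
    ∃ b₀ ∈ polytopeB P0 α, ∀ b' ∈ polytopeB P0 α,
      ∑ x, ∑ J : Finset ι, Q x J * b' x J ≤ ∑ x, ∑ J : Finset ι, Q x J * b₀ x J := by
  have hev : ∀ (x : ∀ i, 𝒳 i) (J : Finset ι),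
      Continuous fun b : (∀ i, 𝒳 i) → Finset ι → ℝ => b x J := by
    intro x J
    exact (continuous_apply J).comp (continuous_apply x)
  have hcont : Continuous fun b : (∀ i, 𝒳 i) → Finset ι → ℝ =>
      ∑ x, ∑ J : Finset ι, Q x J * b x J := by
    refine continuous_finset_sum _ fun x _ => continuous_finset_sum _ fun J _ => ?_
    exact (continuous_const.mul (hev x J))
  have hsub : polytopeB P0 α ⊆
      Set.univ.pi (fun _ : ∀ i, 𝒳 i => Set.univ.pi fun _ : Finset ι => Set.Icc (0:ℝ) 1) := by
    intro b hb x _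
    intro J _
    exact hb.1 x J
  have hcomp : IsCompact
      (Set.univ.pi (fun _ : ∀ i, 𝒳 i => Set.univ.pi fun _ : Finset ι => Set.Icc (0:ℝ) 1)) :=
    isCompact_univ_pi fun _ => isCompact_univ_pi fun _ => isCompact_Icc
  have hclosed : IsClosed (polytopeB P0 α) := by
    have h1 : IsClosed {b : (∀ i, 𝒳 i) → Finset ι → ℝ |
        ∀ x J, b x J ∈ Set.Icc (0:ℝ) 1} := by
      have : {b : (∀ i, 𝒳 i) → Finset ι → ℝ | ∀ x J, b x J ∈ Set.Icc (0:ℝ) 1}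
          = ⋂ x, ⋂ J, {b | b x J ∈ Set.Icc (0:ℝ) 1} := by
        ext b; simp [Set.mem_iInter]
      rw [this]
      exact isClosed_iInter fun x => isClosed_iInter fun J =>
        IsClosed.preimage (hev x J) isClosed_Icc
    have h2 : IsClosed {b : (∀ i, 𝒳 i) → Finset ι → ℝ |
        ∀ x x' (J : Finset ι), (∀ i ∈ J, x i = x' i) → b x J = b x' J} := by
      have : {b : (∀ i, 𝒳 i) → Finset ι → ℝ |
          ∀ x x' (J : Finset ι), (∀ i ∈ J, x i = x' i) → b x J = b x' J}
          = ⋂ x, ⋂ x', ⋂ J, ⋂ (_ : ∀ i ∈ J, x i = x' i), {b | b x J = b x' J} := by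
        ext b; simp [Set.mem_iInter]
      rw [this]
      refine isClosed_iInter fun x => isClosed_iInter fun x' => isClosed_iInter fun J =>
        isClosed_iInter fun _ => isClosed_eq (hev x J) (hev x' J)
    have h3 : IsClosed {b : (∀ i, 𝒳 i) → Finset ι → ℝ |
        ∑ x, P0 x * b x Finset.univ ≤ α} := by
      exact isClosed_le (continuous_finset_sum _ fun x _ =>
        continuous_const.mul (hev x Finset.univ)) continuous_const
    have h4 : IsClosed {b : (∀ i, 𝒳 i) → Finset ι → ℝ |
        ∀ x (J : Finset ι), b x J ≤ b x Finset.univ} := by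
      have : {b : (∀ i, 𝒳 i) → Finset ι → ℝ | ∀ x (J : Finset ι), b x J ≤ b x Finset.univ}
          = ⋂ x, ⋂ J, {b | b x J ≤ b x Finset.univ} := by
        ext b; simp [Set.mem_iInter]
      rw [this]
      exact isClosed_iInter fun x => isClosed_iInter fun J =>
        isClosed_le (hev x J) (hev x Finset.univ)
    have : polytopeB P0 α = _ ∩ (_ ∩ (_ ∩ _)) := rfl
    exact (h1.inter (h2.inter (h3.inter h4)))
  have hK : IsCompact (polytopeB P0 α) := hcomp.of_isClosed_subset hclosed hsub
  have hne : (polytopeB P0 α).Nonempty := by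
    refine ⟨fun _ _ => 0, ?_, ?_, ?_, ?_⟩
    · intro x J; exact ⟨le_refl _, zero_le_one⟩
    · intro x x' J _; rfl
    · simpa using hα
    · intro x J; exact le_refl _
  obtain ⟨b₀, hb₀, hmax⟩ := hK.exists_isMaxOn hne hcont.continuousOn
  exact ⟨b₀, hb₀, fun b' hb' => hmax hb'⟩

/-- When the analyst's prior puts probability one on availability J', there is a
maximizer of expected power in the polytope that depends only on the coordinates in J'
and rejects with probability 0 on reported sets not containing J'. -/
theorem stmt_11 {ι : Type*} [Fintype ι] [DecidableEq ι]
    {𝒳 : ι → Type*} [∀ i, Fintype (𝒳 i)]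
    (P0 : (∀ i, 𝒳 i) → ℝ) (hP0 : ∀ x, 0 ≤ P0 x) (hP0sum : ∑ x, P0 x = 1)
    (α : ℝ) (hα : 0 < α ∧ α < 1)
    (J' : Finset ι)
    (Q : (∀ i, 𝒳 i) → Finset ι → ℝ)
    (hQ : ∀ x J, 0 ≤ Q x J) (hQsum : ∑ x, ∑ J : Finset ι, Q x J = 1)
    (hQJ' : ∀ x (J : Finset ι), J ≠ J' → Q x J = 0) :
    ∃ b ∈ polytopeB P0 α,
      (∀ b' ∈ polytopeB P0 α,
        ∑ x, ∑ J : Finset ι, Q x J * b' x J ≤ ∑ x, ∑ J : Finset ι, Q x J * b x J) ∧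
      (∀ x, b x Finset.univ = b x J') ∧
      (∀ x (J : Finset ι), ¬ J' ⊆ J → b x J = 0) := by
  classical
  obtain ⟨b₀, hb₀, hmax⟩ := polytopeB_exists_max P0 α hα.1.le Q
  obtain ⟨hb₀01, hb₀meas, hb₀size, hb₀mono⟩ := hb₀
  set b : (∀ i, 𝒳 i) → Finset ι → ℝ := fun x J => if J' ⊆ J then b₀ x J' else 0 with hb
  have hbJ' : ∀ x, b x J' = b₀ x J' := by intro x; simp [hb]
  have hbuniv : ∀ x, b x Finset.univ = b₀ x J' := by
    intro x; simp [hb, Finset.subset_univ]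
  have hbmem : b ∈ polytopeB P0 α := by
    refine ⟨?_, ?_, ?_, ?_⟩
    · intro x J
      by_cases h : J' ⊆ J
      · simpa [hb, h] using hb₀01 x J'
      · simp [hb, h]
    · intro x x' J hxx'
      by_cases h : J' ⊆ J
      · simp only [hb, if_pos h]
        exact hb₀meas x x' J' (fun i hi => hxx' i (h hi))
      · simp [hb, h]
    · calc ∑ x, P0 x * b x Finset.univ = ∑ x, P0 x * b₀ x J' := by
            simp [hbuniv]
        _ ≤ ∑ x, P0 x * b₀ x Finset.univ :=
            Finset.sum_le_sum fun x _ => mul_le_mul_of_nonneg_left (hb₀mono x J') (hP0 x)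
        _ ≤ α := hb₀size
    · intro x J
      by_cases h : J' ⊆ J
      · simp [hb, h, Finset.subset_univ]
      · simp only [hb, if_neg h, if_pos (Finset.subset_univ J')]
        exact (hb₀01 x J').1
  have hobj : ∀ b' : (∀ i, 𝒳 i) → Finset ι → ℝ,
      ∑ x, ∑ J : Finset ι, Q x J * b' x J = ∑ x, Q x J' * b' x J' := by
    intro b'
    refine Finset.sum_congr rfl fun x _ => ?_
    refine Finset.sum_eq_single J' (fun J _ hJ => by simp [hQJ' x J hJ]) (by simp)
  refine ⟨b, hbmem, ?_, ?_, ?_⟩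
  · intro b' hb'
    have := hmax b' hb'
    calc ∑ x, ∑ J : Finset ι, Q x J * b' x J
        ≤ ∑ x, ∑ J : Finset ι, Q x J * b₀ x J := this
      _ = ∑ x, Q x J' * b₀ x J' := hobj b₀
      _ = ∑ x, Q x J' * b x J' := by simp [hbJ']
      _ = ∑ x, ∑ J : Finset ι, Q x J * b x J := (hobj b).symm
  · intro x; rw [hbuniv, hbJ']
  · intro x J h; simp [hb, h]
end

section
/- Let $\Pi$ be a finite set and for each $\pi$ let $P_\pi \in \mathbb{R}^n$ be a probability vector, and $f_\pi \in \mathbb{R}^n$ arbitrary score vectors. Define $G(p) = \max_{\pi' \in \Pi} \langle f_{\pi'}, p \rangle$. If the scoring rule $S(\pi',\pi) = \langle f_{\pi'}, P_\pi \rangle$ is proper (i.e., $S(\pi',\pi) \le S(\pi,\pi)$ for all $\pi,\pi'$), then $G$ is convex, $G(P_\pi) = S(\pi,\pi)$, and for each $\pi'$ the vector $f_{\pi'}$ is a subgradient of $G$ at $P_{\pi'}$. -/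
/-- The upper envelope G(p) = max_{π'} ⟨f_{π'}, p⟩ is convex, matches the diagonal score,
and the score vectors are subgradients, when the scoring rule is proper. -/
theorem stmt_13 {Sg : Type*} [Fintype Sg] [Nonempty Sg] (n : ℕ)
    (P : Sg → (Fin n → ℝ))
    (hP : ∀ π, (∀ j, 0 ≤ P π j) ∧ ∑ j, P π j = 1)
    (f : Sg → (Fin n → ℝ))
    (hproper : ∀ π π' : Sg, ∑ j, f π' j * P π j ≤ ∑ j, f π j * P π j)
    (G : (Fin n → ℝ) → ℝ)
    (hG : ∀ p, G p = Finset.univ.sup' Finset.univ_nonempty (fun π' : Sg => ∑ j, f π' j * p j)) :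
    ConvexOn ℝ Set.univ G ∧
    (∀ π : Sg, G (P π) = ∑ j, f π j * P π j) ∧
    (∀ π' : Sg, ∀ q : Fin n → ℝ,
      G (P π') + ∑ j, f π' j * (q j - P π' j) ≤ G q) := by
  have hle : ∀ (π' : Sg) (p : Fin n → ℝ), ∑ j, f π' j * p j ≤ G p := by
    intro π' p
    rw [hG]
    exact Finset.le_sup' (f := fun π : Sg => ∑ j, f π j * p j) (Finset.mem_univ π')
  have hdiag : ∀ π : Sg, G (P π) = ∑ j, f π j * P π j := by
    intro π
    refine le_antisymm ?_ (hle π (P π))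
    rw [hG]
    exact Finset.sup'_le _ _ fun π' _ => hproper π π'
  refine ⟨⟨convex_univ, ?_⟩, hdiag, ?_⟩
  · intro x _ y _ a b ha hb hab
    rw [hG]
    refine Finset.sup'_le _ _ fun π' _ => ?_
    have h1 := hle π' x
    have h2 := hle π' y
    have : ∑ j, f π' j * (a • x + b • y) j
        = a * ∑ j, f π' j * x j + b * ∑ j, f π' j * y j := by
      simp [Finset.mul_sum, Finset.sum_add_distrib]
      ring_nf
      rw [← Finset.sum_add_distrib]
      congr 1; ext j; ring
    rw [this]
    have := add_le_add (mul_le_mul_of_nonneg_left h1 ha) (mul_le_mul_of_nonneg_left h2 hb)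
    simpa [smul_eq_mul] using this
  · intro π' q
    have hq := hle π' q
    have : G (P π') + ∑ j, f π' j * (q j - P π' j) = ∑ j, f π' j * q j := by
      rw [hdiag π']
      rw [← Finset.sum_add_distrib]
      congr 1; ext j; ring
    rw [this]
    exact hq
end

section
/- (Monotonicity and truthful-message conditions imply implementability.) Let all spaces be finite and let $\tilde a : \Pi \times \mathcal{X} \times \mathcal{P}(K) \to \mathbb{R}$ satisfy: (1) $\tilde a(\pi, x, I) \le \tilde a(\pi, x, J)$ for all $\pi, x$ and $I \subseteq J$ (where $\tilde a(\pi, x, J)$ depends on $x$ only through $x_J$); (2) $\mathbb{E}[\tilde a(\pi', X, J) \mid \pi] \le \mathbb{E}[\tilde a(\pi, X, J) \mid \pi]$ for all $\pi, \pi'$. Then with message space $\mathcal{M} = \Pi$ and decision rule $a(\pi, x_I, I) = \tilde a(\pi, x, I)$, the strategy of truthfully reporting $M^* = \pi$ and $I^* = J$ is optimal for the analyst: for every alternative message $\pi'$ and every $(\pi, x, J)$-measurable report rule $\tilde I \subseteq J$, $\mathbb{E}[a(\pi', X_{\tilde I}, \tilde I) \mid \pi] \le \mathbb{E}[a(\pi,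 X_J, J) \mid \pi]$. -/
/-- Monotonicity and the truthful-message condition imply implementability:
with message space equal to the signal space and decision rule equal to the target,
truthful reporting of the signal and full reporting of the data is optimal. -/
theorem stmt_15 {ι : Type*} [Fintype ι] [DecidableEq ι]
    {𝒳 : ι → Type*} [∀ i, Fintype (𝒳 i)]
    {Sg : Type*} [Fintype Sg]
    (ta : Sg → (∀ i, 𝒳 i) → Finset ι → ℝ)
    (htadep : ∀ π x x' (J : Finset ι), (∀ i ∈ J, x i = x' i) → ta π x J = ta π x' J)
    (htamono : ∀ π x (I J : Finset ι), I ⊆ J → ta π x I ≤ ta π x J)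
    (Pcond : Sg → (∀ i, 𝒳 i) → Finset ι → ℝ)
    (hPpos : ∀ π x J, 0 ≤ Pcond π x J)
    (hPsum : ∀ π, ∑ x, ∑ J : Finset ι, Pcond π x J = 1)
    (htruth : ∀ π π' : Sg,
      ∑ x, ∑ J : Finset ι, Pcond π x J * ta π' x J
        ≤ ∑ x, ∑ J : Finset ι, Pcond π x J * ta π x J) :
    ∀ (π π' : Sg) (Itil : (∀ i, 𝒳 i) → Finset ι → Finset ι),
      (∀ x J, Itil x J ⊆ J) →
      ∑ x, ∑ J : Finset ι, Pcond π x J * ta π' x (Itil x J)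
        ≤ ∑ x, ∑ J : Finset ι, Pcond π x J * ta π x J := by
  intro π π' Itil hI
  calc ∑ x, ∑ J : Finset ι, Pcond π x J * ta π' x (Itil x J)
      ≤ ∑ x, ∑ J : Finset ι, Pcond π x J * ta π' x J := by
        refine Finset.sum_le_sum fun x _ => Finset.sum_le_sum fun J _ => ?_
        exact mul_le_mul_of_nonneg_left (htamono π' x _ J (hI x J)) (hPpos π x J)
    _ ≤ _ := htruth π π'
end

section
/- (No-message implementability.) In the finite model without a pre-analysis message, a reduced-form decision function $\bar{a}(\pi, x, J)$ is implementable (consistent with the analyst choosing $I^* \in \arg\max_{I \subseteq J} a(x_I, I)$ for some decision rule $a$ depending only on the reported data) if and only if there exists $\tilde a(x, J)$, depending on $x$ only through $x_J$, that is monotone in $J$ with respect to set inclusion and satisfies $\bar a(\pi, x, J) = \tilde a(x, J)$ on the support of $(\pi, X, J)$. In particular, implementable rules cannot depend on the analyst's private signal $\pi$. -/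
/-- No-message implementability: a reduced-form decision function is implementable
without a pre-analysis message iff it agrees, on the support of the data, with a
function of the reported data alone that is monotone w.r.t. set inclusion;
in particular it cannot depend on the analyst's private signal. -/
theorem stmt_16 {ι : Type*} [Fintype ι] [DecidableEq ι]
    {𝒳 : ι → Type*} [∀ i, Fintype (𝒳 i)]
    {Sg : Type*} [Fintype Sg]
    (P : Sg → (∀ i, 𝒳 i) → Finset ι → ℝ)
    (hPpos : ∀ π x J, 0 ≤ P π x J)
    (hPsum : ∑ π : Sg, ∑ x, ∑ J : Finset ι, P π x J = 1)
    (abar : Sg → (∀ i, 𝒳 i) → Finset ι → ℝ) :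
    (∃ a : (∀ i, 𝒳 i) → Finset ι → ℝ,
      (∀ x x' (I : Finset ι), (∀ i ∈ I, x i = x' i) → a x I = a x' I) ∧
      ∃ Istar : Sg → (∀ i, 𝒳 i) → Finset ι → Finset ι,
        (∀ π x J, Istar π x J ⊆ J) ∧
        (∀ π x (J I : Finset ι), I ⊆ J → a x I ≤ a x (Istar π x J)) ∧
        (∀ π x J, 0 < P π x J → abar π x J = a x (Istar π x J)))
    ↔
    (∃ ta : (∀ i, 𝒳 i) → Finset ι → ℝ,
      (∀ x x' (J : Finset ι), (∀ i ∈ J, x i = x' i) → ta x J = ta x' J) ∧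
      (∀ x (I J : Finset ι), I ⊆ J → ta x I ≤ ta x J) ∧
      (∀ π x J, 0 < P π x J → abar π x J = ta x J)) := by
  constructor
  · rintro ⟨a, ha, Istar, hsub, hopt, hagree⟩
    refine ⟨fun x J => (J.powerset).sup' ⟨∅, Finset.empty_mem_powerset J⟩ (a x), ?_, ?_, ?_⟩
    · intro x x' J hxx'
      exact Finset.sup'_congr _ rfl (fun I hI => ha x x' I
        (fun i hi => hxx' i (Finset.mem_powerset.mp hI hi)))
    · intro x I J hIJ
      exact Finset.sup'_le _ _ (fun K hK =>
        Finset.le_sup' (a x) (Finset.mem_powerset.mpr ((Finset.mem_powerset.mp hK).trans hIJ)))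
    · intro π x J hP
      rw [hagree π x J hP]
      refine le_antisymm ?_ ?_
      · exact Finset.le_sup' (a x) (Finset.mem_powerset.mpr (hsub π x J))
      · exact Finset.sup'_le _ _ (fun K hK => hopt π x J K (Finset.mem_powerset.mp hK))
  · rintro ⟨ta, hta, hmono, hagree⟩
    exact ⟨ta, hta, fun _ _ J => J, fun _ _ _ => le_refl _,
      fun π x J I hIJ => hmono x I J hIJ, fun π x J hP => hagree π x J hP⟩
end
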